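/- Define m̂ : ℝ^8 × ℝ^8 → ℝ^8 by m̂(x, y) = σ̃_x(y), where σ̃_x is the Kirchhoff map built from an almost hermitian structure on S^6. Then m̂ satisfies the norm product rule ‖m̂(x,y)‖² = ‖x‖² ‖y‖², has two-sided identity e, and m̂(x, ·) is a linear isomorphism for each x ≠ 0. -/
import Mathlib


open scoped RealInnerProductSpace Classical

/-- The Kirchhoff map `σ̃_x(z)`: writing `x = α·e + b` with `α = ⟨x,e⟩` and `b ⊥ e`,
`σ̃_x = α·Id + ‖b‖·J̃_{b/‖b‖}` (and `σ̃_x = α·Id` when `b = 0`), where `J : y ↦ J̃_y`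
assigns to each unit vector `y ⊥ e` the extended complex structure of Kirchhoff's
construction. -/
noncomputable def kirchhoffMul {V : Type*} [NormedAddCommGroup V] [InnerProductSpace ℝ V]
    (J : V → V →ₗ[ℝ] V) (e x z : V) : V :=
  if h : x - ⟪x, e⟫ • e = (0 : V) then ⟪x, e⟫ • z
  else ⟪x, e⟫ • z + ‖x - ⟪x, e⟫ • e‖ •
    (J (‖x - ⟪x, e⟫ • e‖⁻¹ • (x - ⟪x, e⟫ • e))) z

/-- the multiplication `m̂(x,y) = σ̃_x(y)` on `ℝ⁸` built from an almost
hermitian structure on `S⁶` via Kirchhoff's construction satisfies the norm product rule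
`‖m̂(x,y)‖² = ‖x‖²·‖y‖²`, has `e` as a two-sided identity, and `m̂(x,·)` is a linear
isomorphism for each `x ≠ 0`. -/
theorem kirchhoff_stmt15
    (e : EuclideanSpace ℝ (Fin 8)) (he : ‖e‖ = 1)
    (J : EuclideanSpace ℝ (Fin 8) → EuclideanSpace ℝ (Fin 8) →ₗ[ℝ] EuclideanSpace ℝ (Fin 8))
    (horth : ∀ y, ‖y‖ = 1 → ⟪y, e⟫ = 0 → ∀ u v, ⟪J y u, J y v⟫ = ⟪u, v⟫)
    (hJ2 : ∀ y, ‖y‖ = 1 → ⟪y, e⟫ = 0 → ∀ u, J y (J y u) = -u)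
    (hJe : ∀ y, ‖y‖ = 1 → ⟪y, e⟫ = 0 → J y e = y)
    (hJy : ∀ y, ‖y‖ = 1 → ⟪y, e⟫ = 0 → J y y = -e) :
    (∀ x z, ‖kirchhoffMul J e x z‖ ^ 2 = ‖x‖ ^ 2 * ‖z‖ ^ 2)
      ∧ (∀ z, kirchhoffMul J e e z = z)
      ∧ (∀ z, kirchhoffMul J e z e = z)
      ∧ (∀ x, x ≠ 0 →
          IsLinearMap ℝ (kirchhoffMul J e x) ∧ Function.Bijective (kirchhoffMul J e x)) := by
  have hee : ⟪e, e⟫ = (1 : ℝ) := by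
    rw [real_inner_self_eq_norm_sq, he]; norm_num
  have hbe : ∀ x : EuclideanSpace ℝ (Fin 8), ⟪x - ⟪x, e⟫ • e, e⟫ = 0 := by
    intro x
    rw [inner_sub_left, real_inner_smul_left, hee, mul_one, sub_self]
  have hy1 : ∀ x : EuclideanSpace ℝ (Fin 8), x - ⟪x, e⟫ • e ≠ 0 →
      ‖‖x - ⟪x, e⟫ • e‖⁻¹ • (x - ⟪x, e⟫ • e)‖ = 1 := fun x h => norm_smul_inv_norm h
  have hy2 : ∀ x : EuclideanSpace ℝ (Fin 8),
      ⟪‖x - ⟪x, e⟫ • e‖⁻¹ • (x - ⟪x, e⟫ • e), e⟫ = 0 := by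
    intro x
    rw [real_inner_smul_left, hbe, mul_zero]
  -- norm product rule
  have key : ∀ x z, ‖kirchhoffMul J e x z‖ ^ 2 = ‖x‖ ^ 2 * ‖z‖ ^ 2 := by
    intro x z
    unfold kirchhoffMul
    split_ifs with h
    · have hx : x = ⟪x, e⟫ • e := sub_eq_zero.mp h
      rw [norm_smul]
      conv_rhs => rw [hx, norm_smul, he, mul_one]
      ring
    · set b := x - ⟪x, e⟫ • e with hb
      set y := ‖b‖⁻¹ • b with hydef
      have h1 := hy1 x h
      have h2 := hy2 x
      have hJz : ∀ u, ‖J y u‖ ^ 2 = ‖u‖ ^ 2 := by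
        intro u
        have := horth y h1 h2 u u
        rw [real_inner_self_eq_norm_sq, real_inner_self_eq_norm_sq] at this
        exact this
      have hperp : ∀ u, ⟪u, J y u⟫ = 0 := by
        intro u
        have h3 := horth y h1 h2 u (J y u)
        rw [hJ2 y h1 h2 u, inner_neg_right, real_inner_comm (J y u) u] at h3
        rw [real_inner_comm]
        linarith
      have hxnorm : ‖x‖ ^ 2 = ⟪x, e⟫ ^ 2 + ‖b‖ ^ 2 := by
        have hx : x = ⟪x, e⟫ • e + b := by rw [hb]; abel
        have hbe' : ⟪e, b⟫ = 0 := by rw [real_inner_comm, hb]; exact hbe x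
        conv_lhs => rw [hx]
        rw [norm_add_sq_real, real_inner_smul_left, hbe', norm_smul, he, mul_one,
          Real.norm_eq_abs, sq_abs]
        ring
      rw [norm_add_sq_real, real_inner_smul_left, real_inner_smul_right, hperp,
        norm_smul, norm_smul, hxnorm]
      rw [mul_pow, mul_pow, hJz z]
      simp [sq_abs]
      ring
  -- linearity
  have hlin : ∀ x, IsLinearMap ℝ (kirchhoffMul J e x) := by
    intro x
    unfold kirchhoffMul
    split_ifs with h
    · exact ⟨fun a b => smul_add _ a b, fun c a => smul_comm _ c a⟩
    · constructor
      · intro a b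
        rw [map_add]
        module
      · intro c a
        rw [map_smul]
        module
  refine ⟨key, ?_, ?_, ?_⟩
  · intro z
    unfold kirchhoffMul
    have h : e - ⟪e, e⟫ • e = (0 : EuclideanSpace ℝ (Fin 8)) := by
      rw [hee, one_smul, sub_self]
    rw [dif_pos h, hee, one_smul]
  · intro z
    unfold kirchhoffMul
    split_ifs with h
    · exact (sub_eq_zero.mp h).symm
    · rw [hJe _ (hy1 z h) (hy2 z), smul_smul, mul_inv_cancel₀ (norm_ne_zero_iff.mpr h),
        one_smul]
      abel
  · intro x hx
    refine ⟨hlin x, ?_⟩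
    let f := IsLinearMap.mk' _ (hlin x)
    have hinj : Function.Injective f := by
      rw [← LinearMap.ker_eq_bot, LinearMap.ker_eq_bot']
      intro m hm
      have hk := key x m
      rw [show f m = kirchhoffMul J e x m from rfl] at hm
      rw [hm, norm_zero, zero_pow (by norm_num : 2 ≠ 0)] at hk
      have hx2 : ‖x‖ ^ 2 ≠ 0 := pow_ne_zero _ (norm_ne_zero_iff.mpr hx)
      have hm2 : ‖m‖ ^ 2 = 0 := (mul_eq_zero.mp hk.symm).resolve_left hx2
      have : ‖m‖ = 0 := by nlinarith [norm_nonneg m]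
      exact norm_eq_zero.mp this
    exact ⟨hinj, LinearMap.injective_iff_surjective.mp hinj⟩
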